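/- The following are equivalent: (1) range E = ker(N₀ − z₀); (2) every nonzero φ ∈ ker(N₀ − z₀) is non-orthogonal to some vector of ker(N₀* − conj(z₀)); (3) the orthogonal projection of ℋ onto ker(N₀* − conj(z₀)) restricts to a linear isomorphism from ker(N₀ − z₀) onto ker(N₀* − conj(z₀)); (4) D = 0; (5) range E* = ker(N₀* − conj(z₀)); (6) every nonzero ψ ∈ ker(N₀* − conj(z₀)) is non-orthogonal to some vector of ker(N₀ − z₀); (7) the orthogonal projection of ℋ onto ker(N₀ − z₀) restricts to a linear isomorphism from ker(N₀* − conj(z₀)) onto ker(N₀ − z₀); (8) D* = 0. (An isolated eigenvalue z₀ satisfying these conditions is called semisimple.) -/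

import Mathlib

open Complex MeasureTheory ContinuousLinearMap
open scoped InnerProductSpace

/-- The Riesz projection `E = -(2πi)⁻¹ ∮_{|ζ-z₀|=ρ₀} (N₀ - ζ)⁻¹ dζ`, expressed via a
given resolvent function `Res`. -/
noncomputable def rieszE {H : Type*} [NormedAddCommGroup H] [NormedSpace ℂ H]
    (Res : ℂ → (H →L[ℂ] H)) (z₀ : ℂ) (ρ₀ : ℝ) : H →L[ℂ] H :=
  -((2 * (Real.pi : ℂ) * Complex.I)⁻¹ • ∮ ζ in C(z₀, ρ₀), Res ζ)

/-- The associated nilpotent `D = -(2πi)⁻¹ ∮_{|ζ-z₀|=ρ₀} (ζ - z₀)(N₀ - ζ)⁻¹ dζ`. -/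
noncomputable def rieszD {H : Type*} [NormedAddCommGroup H] [NormedSpace ℂ H]
    (Res : ℂ → (H →L[ℂ] H)) (z₀ : ℂ) (ρ₀ : ℝ) : H →L[ℂ] H :=
  -((2 * (Real.pi : ℂ) * Complex.I)⁻¹ • ∮ ζ in C(z₀, ρ₀), (ζ - z₀) • Res ζ)

set_option linter.unusedSectionVars false
set_option linter.unusedVariables false

section Helpers

variable {E F : Type*} [NormedAddCommGroup E] [NormedSpace ℂ E] [CompleteSpace E]
  [NormedAddCommGroup F] [NormedSpace ℂ F] [CompleteSpace F]

/-- A continuous linear map commutes with a circle integral. -/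
lemma clm_circleIntegral_comm (L : E →L[ℂ] F) {f : ℂ → E} {c : ℂ} {R : ℝ}
    (hf : CircleIntegrable f c R) :
    L (∮ ζ in C(c, R), f ζ) = ∮ ζ in C(c, R), L (f ζ) := by
  rw [circleIntegral, circleIntegral, ← L.intervalIntegral_comp_comm hf.out]
  simp only [_root_.map_smul]

lemma circleIntegral_add {f g : ℂ → E} {c : ℂ} {R : ℝ} (hf : CircleIntegrable f c R)
    (hg : CircleIntegrable g c R) :
    (∮ ζ in C(c, R), (f ζ + g ζ)) = (∮ ζ in C(c, R), f ζ) + ∮ ζ in C(c, R), g ζ := by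
  simp only [circleIntegral, smul_add]
  exact intervalIntegral.integral_add hf.out hg.out

end Helpers

section Core

variable {H : Type*} [NormedAddCommGroup H] [InnerProductSpace ℂ H] [CompleteSpace H]

/-- constant circle integral of a Banach-valued function is zero -/
lemma circleIntegral_const_eq_zero {c : ℂ} {R : ℝ} (hR : 0 ≤ R) (a : H →L[ℂ] H) :
    (∮ _ζ in C(c, R), a) = 0 :=
  circleIntegral_eq_zero_of_differentiable_on_off_countable hR Set.countable_empty
    continuousOn_const (fun _ _ => differentiableAt_const a)

variable (N : H →L[ℂ] H) (z : ℂ) (ρ : ℝ) (Res : ℂ → (H →L[ℂ] H))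

/-- the standing resolvent hypothesis -/
def ResHyp : Prop := ∀ ζ : ℂ, 0 < ‖ζ - z‖ → ‖ζ - z‖ ≤ ρ →
  (N - ζ • (1 : H →L[ℂ] H)) * Res ζ = 1 ∧ Res ζ * (N - ζ • (1 : H →L[ℂ] H)) = 1

variable {N z ρ Res}

lemma ResHyp.isUnit (h : ResHyp N z ρ Res) {ζ : ℂ} (h1 : 0 < ‖ζ - z‖) (h2 : ‖ζ - z‖ ≤ ρ) :
    IsUnit (N - ζ • (1 : H →L[ℂ] H)) :=
  ⟨⟨N - ζ • 1, Res ζ, (h ζ h1 h2).1, (h ζ h1 h2).2⟩, rfl⟩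

lemma ResHyp.eq_inverse (h : ResHyp N z ρ Res) {ζ : ℂ} (h1 : 0 < ‖ζ - z‖) (h2 : ‖ζ - z‖ ≤ ρ) :
    Res ζ = Ring.inverse (N - ζ • (1 : H →L[ℂ] H)) := by
  rw [show (N - ζ • (1 : H →L[ℂ] H)) =
    ((⟨N - ζ • 1, Res ζ, (h ζ h1 h2).1, (h ζ h1 h2).2⟩ : (H →L[ℂ] H)ˣ) : H →L[ℂ] H) from rfl,
    Ring.inverse_unit]
  rfl

lemma ResHyp.apply_left (h : ResHyp N z ρ Res) {ζ : ℂ} (h1 : 0 < ‖ζ - z‖) (h2 : ‖ζ - z‖ ≤ ρ)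
    (x : H) : Res ζ (N x - ζ • x) = x := by
  have := congrArg (fun (T : H →L[ℂ] H) => T x) (h ζ h1 h2).2
  simpa [ContinuousLinearMap.mul_apply] using this

lemma ResHyp.apply_right (h : ResHyp N z ρ Res) {ζ : ℂ} (h1 : 0 < ‖ζ - z‖) (h2 : ‖ζ - z‖ ≤ ρ)
    (x : H) : N (Res ζ x) - ζ • (Res ζ x) = x := by
  have := congrArg (fun (T : H →L[ℂ] H) => T x) (h ζ h1 h2).1
  simpa [ContinuousLinearMap.mul_apply] using this

end Core

section Core2
open Complex MeasureTheory ContinuousLinearMap Metric Set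

variable {H : Type*} [NormedAddCommGroup H] [InnerProductSpace ℂ H] [CompleteSpace H]
variable {N : H →L[ℂ] H} {z : ℂ} {ρ : ℝ} {Res : ℂ → (H →L[ℂ] H)}

lemma aff_cont : Continuous (fun ζ : ℂ => N - ζ • (1 : H →L[ℂ] H)) :=
  continuous_const.sub (continuous_id.smul continuous_const)

lemma ResHyp.continuousAt_inverse (h : ResHyp N z ρ Res) {ζ : ℂ} (h1 : 0 < ‖ζ - z‖)
    (h2 : ‖ζ - z‖ ≤ ρ) :
    ContinuousAt (fun ζ : ℂ => Ring.inverse (N - ζ • (1 : H →L[ℂ] H))) ζ := by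
  obtain ⟨u, hu⟩ := h.isUnit h1 h2
  have hc : ContinuousAt Ring.inverse (N - ζ • (1 : H →L[ℂ] H)) := by
    rw [← hu]; exact NormedRing.inverse_continuousAt u
  have haff : ContinuousAt (fun ζ : ℂ => N - ζ • (1 : H →L[ℂ] H)) ζ := aff_cont.continuousAt
  exact ContinuousAt.comp (g := Ring.inverse) hc haff

lemma ResHyp.differentiableAt_inverse (h : ResHyp N z ρ Res) {ζ : ℂ} (h1 : 0 < ‖ζ - z‖)
    (h2 : ‖ζ - z‖ ≤ ρ) :
    DifferentiableAt ℂ (fun ζ : ℂ => Ring.inverse (N - ζ • (1 : H →L[ℂ] H))) ζ := by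
  have haff : DifferentiableAt ℂ (fun ζ : ℂ => N - ζ • (1 : H →L[ℂ] H)) ζ :=
    (differentiableAt_const N).sub (differentiableAt_id.smul_const 1)
  exact (_root_.differentiableAt_inverse (h.isUnit h1 h2)).comp ζ haff

lemma ResHyp.eqOn_sphere (h : ResHyp N z ρ Res) {r : ℝ} (hr : 0 < r) (hrρ : r ≤ ρ) :
    EqOn Res (fun ζ : ℂ => Ring.inverse (N - ζ • (1 : H →L[ℂ] H))) (sphere z r) := by
  intro ζ hζ
  rw [mem_sphere_iff_norm] at hζ
  exact h.eq_inverse (by rw [hζ]; exact hr) (by rw [hζ]; exact hrρ)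

lemma ResHyp.continuousOn_sphere (h : ResHyp N z ρ Res) {r : ℝ} (hr : 0 < r) (hrρ : r ≤ ρ) :
    ContinuousOn Res (sphere z r) := by
  intro ζ hζ
  have hmem := hζ; rw [mem_sphere_iff_norm] at hmem
  exact ((h.continuousAt_inverse (by rw [hmem]; exact hr)
    (by rw [hmem]; exact hrρ)).continuousWithinAt).congr (h.eqOn_sphere hr hrρ)
    (h.eqOn_sphere hr hrρ hζ)

lemma ResHyp.circleIntegrable (h : ResHyp N z ρ Res) {r : ℝ} (hr : 0 < r) (hrρ : r ≤ ρ) :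
    CircleIntegrable Res z r :=
  (h.continuousOn_sphere hr hrρ).circleIntegrable hr.le

lemma ResHyp.circleIntegrable_apply (h : ResHyp N z ρ Res) {r : ℝ} (hr : 0 < r) (hrρ : r ≤ ρ)
    (x : H) : CircleIntegrable (fun ζ => Res ζ x) z r :=
  (((ContinuousLinearMap.apply ℂ H x).continuous.comp_continuousOn
    (h.continuousOn_sphere hr hrρ))).circleIntegrable hr.le

/-- applying the Riesz integral to a vector -/
lemma ResHyp.rieszE_apply (h : ResHyp N z ρ Res) (hρ : 0 < ρ) (x : H) :
    rieszE Res z ρ x = -((2 * (Real.pi : ℂ) * Complex.I)⁻¹ • ∮ ζ in C(z, ρ), Res ζ x) := by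
  rw [rieszE]
  simp only [ContinuousLinearMap.neg_apply, ContinuousLinearMap.smul_apply]
  have hcomm := clm_circleIntegral_comm (ContinuousLinearMap.apply ℂ H x)
    (h.circleIntegrable hρ le_rfl)
  simp only [ContinuousLinearMap.apply_apply] at hcomm
  rw [hcomm]

end Core2
section Core3
open Complex MeasureTheory ContinuousLinearMap Metric Set

variable {H : Type*} [NormedAddCommGroup H] [InnerProductSpace ℂ H] [CompleteSpace H]
variable {N : H →L[ℂ] H} {z : ℂ} {ρ : ℝ} {Res : ℂ → (H →L[ℂ] H)}

lemma ResHyp.res_eigen (h : ResHyp N z ρ Res) {ζ : ℂ} (h1 : 0 < ‖ζ - z‖) (h2 : ‖ζ - z‖ ≤ ρ)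
    {lam : ℂ} {v : H} (hv : N v = lam • v) (hne : lam ≠ ζ) :
    Res ζ v = (lam - ζ)⁻¹ • v := by
  have h3 : N v - ζ • v = (lam - ζ) • v := by rw [hv, sub_smul]
  have h4 := h.apply_left h1 h2 v
  rw [h3, _root_.map_smul] at h4
  have h5 : (lam - ζ) ≠ 0 := sub_ne_zero.mpr hne
  calc Res ζ v = (lam - ζ)⁻¹ • ((lam - ζ) • Res ζ v) := by rw [smul_smul, inv_mul_cancel₀ h5, one_smul]
  _ = (lam - ζ)⁻¹ • v := by rw [h4]

lemma ResHyp.eigen_punctured (h : ResHyp N z ρ Res) {lam : ℂ} (h1 : 0 < ‖lam - z‖)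
    (h2 : ‖lam - z‖ ≤ ρ) {v : H} (hv : N v = lam • v) : v = 0 := by
  have := h.apply_left h1 h2 v
  rw [hv, sub_self, map_zero] at this
  exact this.symm

lemma circleIntegral_center_inv {z : ℂ} {ρ : ℝ} (hρ : 0 < ρ) :
    (∮ ζ in C(z, ρ), (z - ζ)⁻¹) = -(2 * (Real.pi : ℂ) * Complex.I) := by
  have heq : (fun ζ : ℂ => (z - ζ)⁻¹) = fun ζ : ℂ => (-1 : ℂ) • (ζ - z)⁻¹ := by
    funext ζ; rw [← neg_sub, inv_neg]; simp
  rw [heq, circleIntegral.integral_smul, circleIntegral.integral_sub_center_inv z hρ.ne']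
  simp

lemma circleIntegral_inv_far {z w : ℂ} {ρ : ℝ} (hρ : 0 ≤ ρ) (hw : ρ < ‖w - z‖) :
    (∮ ζ in C(z, ρ), (w - ζ)⁻¹) = 0 := by
  have hne : ∀ ζ ∈ closedBall z ρ, w - ζ ≠ 0 := by
    intro ζ hζ
    rw [mem_closedBall, dist_eq_norm] at hζ
    intro hc
    rw [sub_eq_zero] at hc
    subst hc
    exact absurd hζ (not_le.mpr hw)
  refine circleIntegral_eq_zero_of_differentiable_on_off_countable hρ Set.countable_empty ?_ ?_
  · exact ((continuous_const.sub continuous_id).continuousOn).inv₀ hne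
  · intro ζ hζ
    exact ((differentiableAt_const w).sub differentiableAt_id).inv
      (hne ζ (ball_subset_closedBall hζ.1))

lemma neg_inv_two_pi_I_smul {v : H} :
    -((2 * (Real.pi : ℂ) * Complex.I)⁻¹ • (-(2 * (Real.pi : ℂ) * Complex.I)) • v) = v := by
  rw [smul_smul]
  have h : (2 * (Real.pi : ℂ) * Complex.I)⁻¹ * -(2 * (Real.pi : ℂ) * Complex.I) = -1 := by
    rw [mul_neg, inv_mul_cancel₀ Complex.two_pi_I_ne_zero]
  rw [h]; simp

lemma ResHyp.rieszE_eigen_center (h : ResHyp N z ρ Res) (hρ : 0 < ρ) {v : H}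
    (hv : N v = z • v) : rieszE Res z ρ v = v := by
  rw [h.rieszE_apply hρ v]
  have key : (∮ ζ in C(z, ρ), Res ζ v) = (∮ ζ in C(z, ρ), (z - ζ)⁻¹) • v := by
    rw [← circleIntegral.integral_smul_const]
    refine circleIntegral.integral_congr hρ.le (fun ζ hζ => ?_)
    rw [mem_sphere_iff_norm] at hζ
    exact h.res_eigen (by rw [hζ]; exact hρ) (by rw [hζ]) hv
      (by intro hc; subst hc; rw [sub_self, norm_zero] at hζ; exact hρ.ne' hζ.symm)
  rw [key, circleIntegral_center_inv hρ]
  exact neg_inv_two_pi_I_smul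

lemma ResHyp.rieszE_eigen_far (h : ResHyp N z ρ Res) (hρ : 0 < ρ) {lam : ℂ}
    (hlam : ρ < ‖lam - z‖) {v : H} (hv : N v = lam • v) : rieszE Res z ρ v = 0 := by
  rw [h.rieszE_apply hρ v]
  have key : (∮ ζ in C(z, ρ), Res ζ v) = (∮ ζ in C(z, ρ), (lam - ζ)⁻¹) • v := by
    rw [← circleIntegral.integral_smul_const]
    refine circleIntegral.integral_congr hρ.le (fun ζ hζ => ?_)
    rw [mem_sphere_iff_norm] at hζ
    refine h.res_eigen (by rw [hζ]; exact hρ) (by rw [hζ]) hv ?_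
    intro hc; subst hc
    rw [hζ] at hlam; exact lt_irrefl _ hlam
  rw [key, circleIntegral_inv_far hρ.le hlam]
  simp

end Core3
section Core4
open Complex MeasureTheory ContinuousLinearMap Metric Set

variable {H : Type*} [NormedAddCommGroup H] [InnerProductSpace ℂ H] [CompleteSpace H]
variable {N : H →L[ℂ] H} {z : ℂ} {ρ : ℝ} {Res : ℂ → (H →L[ℂ] H)}

lemma ResHyp.circleIntegrable_sub_smul (h : ResHyp N z ρ Res) {r : ℝ} (hr : 0 < r)
    (hrρ : r ≤ ρ) : CircleIntegrable (fun ζ => (ζ - z) • Res ζ) z r :=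
  (((continuous_id.sub continuous_const).continuousOn).smul
    (h.continuousOn_sphere hr hrρ)).circleIntegrable hr.le

lemma ResHyp.M_mul_integral (h : ResHyp N z ρ Res) (hρ : 0 < ρ) :
    (N - z • (1 : H →L[ℂ] H)) * (∮ ζ in C(z, ρ), Res ζ)
      = ∮ ζ in C(z, ρ), (ζ - z) • Res ζ := by
  have h1 : (N - z • (1 : H →L[ℂ] H)) * (∮ ζ in C(z, ρ), Res ζ)
      = ∮ ζ in C(z, ρ), (N - z • (1 : H →L[ℂ] H)) * Res ζ := by
    have := clm_circleIntegral_comm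
      (ContinuousLinearMap.mul ℂ (H →L[ℂ] H) (N - z • (1 : H →L[ℂ] H)))
      (h.circleIntegrable hρ le_rfl)
    simpa only [ContinuousLinearMap.mul_apply'] using this
  rw [h1]
  have h2 : (∮ ζ in C(z, ρ), (N - z • (1 : H →L[ℂ] H)) * Res ζ)
      = ∮ ζ in C(z, ρ), ((1 : H →L[ℂ] H) + (ζ - z) • Res ζ) := by
    refine circleIntegral.integral_congr hρ.le (fun ζ hζ => ?_)
    rw [mem_sphere_iff_norm] at hζ
    have hres := (h ζ (by rw [hζ]; exact hρ) (by rw [hζ])).1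
    have hsplit : N - z • (1 : H →L[ℂ] H)
        = (N - ζ • (1 : H →L[ℂ] H)) + (ζ - z) • (1 : H →L[ℂ] H) := by
      rw [sub_smul]; abel
    rw [hsplit, add_mul, hres, smul_mul_assoc, one_mul]
  rw [h2, circleIntegral_add (circleIntegrable_const 1 z ρ) (h.circleIntegrable_sub_smul hρ le_rfl),
    circleIntegral_const_eq_zero hρ.le, zero_add]

lemma ResHyp.integral_mul_M (h : ResHyp N z ρ Res) (hρ : 0 < ρ) :
    (∮ ζ in C(z, ρ), Res ζ) * (N - z • (1 : H →L[ℂ] H))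
      = ∮ ζ in C(z, ρ), (ζ - z) • Res ζ := by
  have h1 : (∮ ζ in C(z, ρ), Res ζ) * (N - z • (1 : H →L[ℂ] H))
      = ∮ ζ in C(z, ρ), Res ζ * (N - z • (1 : H →L[ℂ] H)) := by
    have := clm_circleIntegral_comm
      ((ContinuousLinearMap.mul ℂ (H →L[ℂ] H)).flip (N - z • (1 : H →L[ℂ] H)))
      (h.circleIntegrable hρ le_rfl)
    simpa only [ContinuousLinearMap.flip_apply, ContinuousLinearMap.mul_apply'] using this
  rw [h1]
  have h2 : (∮ ζ in C(z, ρ), Res ζ * (N - z • (1 : H →L[ℂ] H)))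
      = ∮ ζ in C(z, ρ), ((1 : H →L[ℂ] H) + (ζ - z) • Res ζ) := by
    refine circleIntegral.integral_congr hρ.le (fun ζ hζ => ?_)
    rw [mem_sphere_iff_norm] at hζ
    have hres := (h ζ (by rw [hζ]; exact hρ) (by rw [hζ])).2
    have hsplit : N - z • (1 : H →L[ℂ] H)
        = (N - ζ • (1 : H →L[ℂ] H)) + (ζ - z) • (1 : H →L[ℂ] H) := by
      rw [sub_smul]; abel
    rw [hsplit, mul_add, hres, mul_smul_comm, mul_one]
  rw [h2, circleIntegral_add (circleIntegrable_const 1 z ρ) (h.circleIntegrable_sub_smul hρ le_rfl),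
    circleIntegral_const_eq_zero hρ.le, zero_add]

lemma ResHyp.rieszD_eq_M_mul_E (h : ResHyp N z ρ Res) (hρ : 0 < ρ) :
    rieszD Res z ρ = (N - z • (1 : H →L[ℂ] H)) * rieszE Res z ρ := by
  rw [rieszD, rieszE, ← h.M_mul_integral hρ, mul_neg, mul_smul_comm]

lemma ResHyp.rieszD_eq_E_mul_M (h : ResHyp N z ρ Res) (hρ : 0 < ρ) :
    rieszD Res z ρ = rieszE Res z ρ * (N - z • (1 : H →L[ℂ] H)) := by
  rw [rieszD, rieszE, ← h.integral_mul_M hρ, neg_mul, smul_mul_assoc]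

end Core4
section Core5
open Complex MeasureTheory ContinuousLinearMap Metric Set

variable {H : Type*} [NormedAddCommGroup H] [InnerProductSpace ℂ H] [CompleteSpace H]
variable {N : H →L[ℂ] H} {z : ℂ} {ρ : ℝ} {Res : ℂ → (H →L[ℂ] H)}

lemma CircleIntegrable.const_smul' {f : ℂ → H} {c : ℂ} {R : ℝ} (hf : CircleIntegrable f c R)
    (a : ℂ) : CircleIntegrable (fun ζ => a • f ζ) c R :=
  IntervalIntegrable.smul hf a

lemma ResHyp.integral_radius_indep (h : ResHyp N z ρ Res) (hρ : 0 < ρ) {r : ℝ} (hr : 0 < r)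
    (hrρ : r ≤ ρ) : (∮ ζ in C(z, r), Res ζ) = ∮ ζ in C(z, ρ), Res ζ := by
  have e1 : (∮ ζ in C(z, r), Res ζ)
      = ∮ ζ in C(z, r), Ring.inverse (N - ζ • (1 : H →L[ℂ] H)) :=
    circleIntegral.integral_congr hr.le (h.eqOn_sphere hr hrρ)
  have e2 : (∮ ζ in C(z, ρ), Res ζ)
      = ∮ ζ in C(z, ρ), Ring.inverse (N - ζ • (1 : H →L[ℂ] H)) :=
    circleIntegral.integral_congr hρ.le (h.eqOn_sphere hρ le_rfl)
  rw [e1, e2]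
  refine (circleIntegral_eq_of_differentiable_on_annulus_off_countable hr hrρ
    Set.countable_empty ?_ ?_).symm
  · intro ζ hζ
    have h1 := hζ.1
    have h2 := hζ.2
    rw [mem_closedBall, dist_eq_norm] at h1
    rw [mem_ball, dist_eq_norm, not_lt] at h2
    exact (h.continuousAt_inverse (lt_of_lt_of_le hr h2) h1).continuousWithinAt
  · intro ζ hζ
    have h1 := hζ.1.1
    have h2 := hζ.1.2
    rw [mem_ball, dist_eq_norm] at h1
    rw [mem_closedBall, dist_eq_norm, not_le] at h2
    exact h.differentiableAt_inverse (lt_trans hr h2) h1.le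

lemma ResHyp.res_sub (h : ResHyp N z ρ Res) {ζ ω : ℂ} (hζ1 : 0 < ‖ζ - z‖) (hζ2 : ‖ζ - z‖ ≤ ρ)
    (hω1 : 0 < ‖ω - z‖) (hω2 : ‖ω - z‖ ≤ ρ) :
    Res ζ - Res ω = (ζ - ω) • (Res ζ * Res ω) := by
  have hz := h ζ hζ1 hζ2
  have hw := h ω hω1 hω2
  have e1 : Res ζ = Res ζ * ((N - ω • (1 : H →L[ℂ] H)) * Res ω) := by rw [hw.1, mul_one]
  have e2 : Res ω = (Res ζ * (N - ζ • (1 : H →L[ℂ] H))) * Res ω := by rw [hz.2, one_mul]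
  have e3 : (N - ω • (1 : H →L[ℂ] H)) - (N - ζ • (1 : H →L[ℂ] H))
      = (ζ - ω) • (1 : H →L[ℂ] H) := by rw [sub_sub_sub_cancel_left, ← sub_smul]
  calc Res ζ - Res ω
      = Res ζ * ((N - ω • (1 : H →L[ℂ] H)) * Res ω)
        - (Res ζ * (N - ζ • (1 : H →L[ℂ] H))) * Res ω := by rw [← e1, ← e2]
    _ = (Res ζ * ((N - ω • (1 : H →L[ℂ] H)) - (N - ζ • (1 : H →L[ℂ] H)))) * Res ω := by
        noncomm_ring
    _ = (Res ζ * ((ζ - ω) • (1 : H →L[ℂ] H))) * Res ω := by rw [e3]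
    _ = (ζ - ω) • (Res ζ * Res ω) := by rw [mul_smul_comm, mul_one, smul_mul_assoc]

lemma ResHyp.res_apply_res (h : ResHyp N z ρ Res) (hρ : 0 < ρ) {r : ℝ} (hr : 0 < r)
    (hrρ : r < ρ) {ζ ω : ℂ} (hζ : ζ ∈ sphere z ρ) (hω : ω ∈ sphere z r) (x : H) :
    Res ζ (Res ω x) = (ζ - ω)⁻¹ • (Res ζ x - Res ω x) := by
  rw [mem_sphere_iff_norm] at hζ hω
  have hne : ζ ≠ ω := by
    intro hc; subst hc; rw [hζ] at hω; exact (ne_of_gt hrρ) hω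
  have hsub := h.res_sub (by rw [hζ]; exact hρ) (by rw [hζ]) (by rw [hω]; exact hr)
    (by rw [hω]; exact hrρ.le)
  have happ := congrArg (fun T : H →L[ℂ] H => T x) hsub
  simp only [ContinuousLinearMap.sub_apply, ContinuousLinearMap.smul_apply,
    ContinuousLinearMap.mul_apply] at happ
  have h5 : (ζ - ω) ≠ 0 := sub_ne_zero.mpr hne
  calc Res ζ (Res ω x) = (ζ - ω)⁻¹ • ((ζ - ω) • Res ζ (Res ω x)) := by
        rw [smul_smul, inv_mul_cancel₀ h5, one_smul]
    _ = (ζ - ω)⁻¹ • (Res ζ x - Res ω x) := by rw [← happ]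

lemma cauchyAux {z : ℂ} {ρ : ℝ} (hρ : 0 < ρ) {f : ℂ → H} (hf : CircleIntegrable f z ρ)
    {r : ℝ} (hr : 0 < r) (hrρ : r < ρ) :
    CircleIntegrable (fun ω => ∮ ζ in C(z, ρ), (ζ - ω)⁻¹ • f ζ) z r ∧
    (∮ ω in C(z, r), ∮ ζ in C(z, ρ), (ζ - ω)⁻¹ • f ζ) = 0 := by
  set Rn : NNReal := ⟨ρ, hρ.le⟩ with hRn
  have hcoe : ((Rn : NNReal) : ℝ) = ρ := rfl
  have hfn : CircleIntegrable f z (Rn : ℝ) := hf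
  have hps := hasFPowerSeriesOn_cauchy_integral (f := f) (c := z) (R := Rn) hfn
    (NNReal.coe_pos.mp (by rw [hcoe]; exact hρ))
  have han := hps.analyticOnNhd
  rw [Metric.emetric_ball_nnreal] at han
  have hdiff : ∀ w ∈ closedBall z r,
      DifferentiableAt ℂ
        (fun w => (2 * (Real.pi : ℂ) * I)⁻¹ • ∮ ζ in C(z, ρ), (ζ - w)⁻¹ • f ζ) w := by
    intro w hw
    have hw' : w ∈ ball z ρ := closedBall_subset_ball hrρ hw
    exact (han w (by rw [hcoe]; exact hw')).differentiableAt
  have hcont : ContinuousOn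
      (fun w => (2 * (Real.pi : ℂ) * I)⁻¹ • ∮ ζ in C(z, ρ), (ζ - w)⁻¹ • f ζ)
      (closedBall z r) :=
    fun w hw => ((hdiff w hw).continuousAt).continuousWithinAt
  have hzero : (∮ ω in C(z, r),
      (2 * (Real.pi : ℂ) * I)⁻¹ • ∮ ζ in C(z, ρ), (ζ - ω)⁻¹ • f ζ) = 0 :=
    circleIntegral_eq_zero_of_differentiable_on_off_countable hr.le Set.countable_empty
      hcont (fun w hw => hdiff w (ball_subset_closedBall hw.1))
  have hfun : (fun ω => ∮ ζ in C(z, ρ), (ζ - ω)⁻¹ • f ζ)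
      = fun ω => (2 * (Real.pi : ℂ) * I) •
        ((2 * (Real.pi : ℂ) * I)⁻¹ • ∮ ζ in C(z, ρ), (ζ - ω)⁻¹ • f ζ) := by
    funext ω
    rw [smul_smul, mul_inv_cancel₀ Complex.two_pi_I_ne_zero, one_smul]
  constructor
  · rw [hfun]
    refine CircleIntegrable.const_smul' ?_ _
    exact ((hcont.mono (sphere_subset_closedBall)).circleIntegrable hr.le)
  · rw [hfun, circleIntegral.integral_smul, hzero, smul_zero]

lemma ResHyp.rieszE_idem (h : ResHyp N z ρ Res) (hρ : 0 < ρ) :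
    rieszE Res z ρ * rieszE Res z ρ = rieszE Res z ρ := by
  have hr : 0 < ρ / 2 := by linarith
  have hrρ : ρ / 2 < ρ := by linarith
  ext x
  set k : ℂ := (2 * (Real.pi : ℂ) * I)⁻¹ with hk
  have hEx : rieszE Res z ρ x = -(k • ∮ ω in C(z, ρ / 2), Res ω x) := by
    rw [h.rieszE_apply hρ x]
    have hop := h.integral_radius_indep hρ hr hrρ.le
    have happ := congrArg (fun T : H →L[ℂ] H => T x) hop
    have h1 := clm_circleIntegral_comm (ContinuousLinearMap.apply ℂ H x)
      (h.circleIntegrable hr hrρ.le)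
    have h2 := clm_circleIntegral_comm (ContinuousLinearMap.apply ℂ H x)
      (h.circleIntegrable hρ le_rfl)
    simp only [ContinuousLinearMap.apply_apply] at h1 h2 happ
    rw [← h2, ← happ, h1]
  have key : ∀ ω ∈ sphere z (ρ / 2), rieszE Res z ρ (Res ω x)
      = Res ω x - k • (∮ ζ in C(z, ρ), (ζ - ω)⁻¹ • Res ζ x) := by
    intro ω hω
    have hω' := hω
    rw [mem_sphere_iff_norm] at hω'
    rw [h.rieszE_apply hρ (Res ω x)]
    have hζω : ∀ ζ ∈ sphere z ρ, ζ - ω ≠ 0 := by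
      intro ζ hζ
      rw [mem_sphere_iff_norm] at hζ
      intro hc
      rw [sub_eq_zero] at hc
      subst hc
      rw [hζ] at hω'
      exact (ne_of_gt hrρ) hω'
    have hcongr : (∮ ζ in C(z, ρ), Res ζ (Res ω x))
        = ∮ ζ in C(z, ρ), ((ζ - ω)⁻¹ • Res ζ x - (ζ - ω)⁻¹ • Res ω x) := by
      refine circleIntegral.integral_congr hρ.le (fun ζ hζ => ?_)
      rw [h.res_apply_res hρ hr hrρ hζ hω x, smul_sub]
    have hi1 : CircleIntegrable (fun ζ => (ζ - ω)⁻¹ • Res ζ x) z ρ := by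
      refine ContinuousOn.circleIntegrable hρ.le ?_
      refine ContinuousOn.smul
        (((continuous_id.sub continuous_const).continuousOn).inv₀ hζω) ?_
      exact (ContinuousLinearMap.apply ℂ H x).continuous.comp_continuousOn
        (h.continuousOn_sphere hρ le_rfl)
    have hi2 : CircleIntegrable (fun ζ => (ζ - ω)⁻¹ • Res ω x) z ρ := by
      refine ContinuousOn.circleIntegrable hρ.le ?_
      exact (((continuous_id.sub continuous_const).continuousOn).inv₀ hζω).smul
        continuousOn_const
    rw [hcongr, circleIntegral.integral_sub hi1 hi2, circleIntegral.integral_smul_const,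
      circleIntegral.integral_sub_inv_of_mem_ball
        (by rw [mem_ball, dist_eq_norm, hω']; exact hrρ)]
    rw [smul_sub, neg_sub, smul_smul, hk, inv_mul_cancel₀ Complex.two_pi_I_ne_zero, one_smul]
  have hintRx : CircleIntegrable (fun ω => Res ω x) z (ρ / 2) :=
    h.circleIntegrable_apply hr hrρ.le x
  have hCau := cauchyAux hρ (h.circleIntegrable_apply hρ le_rfl x) hr hrρ
  rw [ContinuousLinearMap.mul_apply]
  conv_lhs => rw [hEx]
  rw [map_neg, _root_.map_smul, clm_circleIntegral_comm (rieszE Res z ρ) hintRx,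
    circleIntegral.integral_congr hr.le key,
    circleIntegral.integral_sub hintRx (hCau.1.const_smul' k),
    circleIntegral.integral_smul, hCau.2, smul_zero, sub_zero, ← hEx]

end Core5
section Core6
open Complex MeasureTheory ContinuousLinearMap Metric Set Module
open scoped InnerProductSpace

variable {H : Type*} [NormedAddCommGroup H] [InnerProductSpace ℂ H] [CompleteSpace H]
variable {N : H →L[ℂ] H} {z : ℂ} {ρ : ℝ} {Res : ℂ → (H →L[ℂ] H)}

lemma adjoint_sub_smul_one (N : H →L[ℂ] H) (z : ℂ) :
    adjoint (N - z • (1 : H →L[ℂ] H)) = adjoint N - (starRingEnd ℂ) z • (1 : H →L[ℂ] H) := by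
  rw [← star_eq_adjoint, star_sub, star_smul, star_one, star_eq_adjoint]
  rfl

theorem ResHyp.riesz_tfae (h : ResHyp N z ρ Res) (hρ : 0 < ρ)
    (hfinE : FiniteDimensional ℂ (LinearMap.range (rieszE Res z ρ : H →ₗ[ℂ] H)))
    [FiniteDimensional ℂ (LinearMap.ker ((N - z • (1 : H →L[ℂ] H) : H →L[ℂ] H) : H →ₗ[ℂ] H))]
    [FiniteDimensional ℂ
      (LinearMap.ker ((adjoint N - (starRingEnd ℂ) z • (1 : H →L[ℂ] H) : H →L[ℂ] H) : H →ₗ[ℂ] H))]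
    (hdim : Module.finrank ℂ (LinearMap.ker ((N - z • (1 : H →L[ℂ] H) : H →L[ℂ] H) : H →ₗ[ℂ] H)) =
      Module.finrank ℂ
        (LinearMap.ker ((adjoint N - (starRingEnd ℂ) z • (1 : H →L[ℂ] H) : H →L[ℂ] H) : H →ₗ[ℂ] H))) :
    [ LinearMap.range (rieszE Res z ρ : H →ₗ[ℂ] H) = LinearMap.ker ((N - z • (1 : H →L[ℂ] H) : H →L[ℂ] H) : H →ₗ[ℂ] H),
      ∀ φ ∈ LinearMap.ker ((N - z • (1 : H →L[ℂ] H) : H →L[ℂ] H) : H →ₗ[ℂ] H), φ ≠ 0 →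
        ∃ ψ ∈ LinearMap.ker ((adjoint N - (starRingEnd ℂ) z • (1 : H →L[ℂ] H) : H →L[ℂ] H) : H →ₗ[ℂ] H),
          ⟪(ψ : H), (φ : H)⟫_ℂ ≠ 0,
      Function.Bijective (fun φ : LinearMap.ker ((N - z • (1 : H →L[ℂ] H) : H →L[ℂ] H) : H →ₗ[ℂ] H) =>
        Submodule.orthogonalProjectionOnto
          (LinearMap.ker ((adjoint N - (starRingEnd ℂ) z • (1 : H →L[ℂ] H) : H →L[ℂ] H) : H →ₗ[ℂ] H)) (φ : H)),
      rieszD Res z ρ = 0 ].TFAE := by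
  set M : H →L[ℂ] H := N - z • (1 : H →L[ℂ] H) with hM
  set E : H →L[ℂ] H := rieszE Res z ρ with hE
  set W : Submodule ℂ H :=
    LinearMap.ker ((adjoint N - (starRingEnd ℂ) z • (1 : H →L[ℂ] H) : H →L[ℂ] H) : H →ₗ[ℂ] H) with hW
  have hD1 : rieszD Res z ρ = M * E := h.rieszD_eq_M_mul_E hρ
  have hD2 : rieszD Res z ρ = E * M := h.rieszD_eq_E_mul_M hρ
  have hadjM : adjoint M = adjoint N - (starRingEnd ℂ) z • (1 : H →L[ℂ] H) :=
    adjoint_sub_smul_one N z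
  have hWkerAdj : ∀ ψ ∈ W, adjoint M ψ = 0 := by
    intro ψ hψ; rw [hadjM]; exact hψ
  have hperp : ∀ ψ ∈ W, ∀ y : H, ⟪ψ, M y⟫_ℂ = 0 := by
    intro ψ hψ y
    rw [← ContinuousLinearMap.adjoint_inner_left M y ψ, hWkerAdj ψ hψ, inner_zero_left]
  have hMapply : ∀ x : H, M x = N x - z • x := by
    intro x; simp [hM, ContinuousLinearMap.sub_apply, ContinuousLinearMap.smul_apply]
  have hkerN : ∀ φ ∈ LinearMap.ker (M : H →ₗ[ℂ] H), N φ = z • φ := by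
    intro φ hφ
    have : M φ = 0 := hφ
    rw [hMapply] at this
    linear_combination (norm := module) this
  have hEfix : ∀ φ ∈ LinearMap.ker (M : H →ₗ[ℂ] H), E φ = φ := fun φ hφ =>
    h.rieszE_eigen_center hρ (hkerN φ hφ)
  have hker_range : LinearMap.ker (M : H →ₗ[ℂ] H) ≤ LinearMap.range (E : H →ₗ[ℂ] H) := by
    intro φ hφ
    exact ⟨φ, hEfix φ hφ⟩
  tfae_have 1 → 4 := by
    intro h1
    ext x
    have hx : E x ∈ LinearMap.ker (M : H →ₗ[ℂ] H) := h1 ▸ LinearMap.mem_range_self _ x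
    rw [hD1]
    simpa [ContinuousLinearMap.mul_apply] using hx
  tfae_have 4 → 2 := by
    intro h4 φ hφ hφne
    by_contra hc
    push_neg at hc
    have hφW : φ ∈ Wᗮ := by
      rw [Submodule.mem_orthogonal]
      intro ψ hψ
      exact hc ψ hψ
    have hWperp : W = (LinearMap.range (M : H →ₗ[ℂ] H))ᗮ := by
      ext ψ
      constructor
      · intro hψ
        rw [Submodule.mem_orthogonal']
        rintro u ⟨y, rfl⟩
        exact hperp ψ hψ y
      · intro hψ
        rw [Submodule.mem_orthogonal'] at hψ
        show ψ ∈ LinearMap.ker ((adjoint N - (starRingEnd ℂ) z • (1 : H →L[ℂ] H) : H →L[ℂ] H) : H →ₗ[ℂ] H)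
        rw [LinearMap.mem_ker, ← hadjM, ContinuousLinearMap.coe_coe]
        refine ext_inner_right ℂ (fun v => ?_)
        rw [ContinuousLinearMap.adjoint_inner_left, inner_zero_left]
        exact hψ (M v) ⟨v, rfl⟩
    have hφcl : φ ∈ closure ((LinearMap.range (M : H →ₗ[ℂ] H) : Submodule ℂ H) : Set H) := by
      rw [← Submodule.topologicalClosure_coe, ← Submodule.orthogonal_orthogonal_eq_closure]
      rw [hWperp] at hφW
      exact hφW
    have hE0 : Set.EqOn (⇑E) (fun _ => (0 : H))
        ((LinearMap.range (M : H →ₗ[ℂ] H) : Submodule ℂ H) : Set H) := by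
      rintro u ⟨y, rfl⟩
      have : (E * M) y = 0 := by rw [← hD2, h4]; rfl
      simpa [ContinuousLinearMap.mul_apply] using this
    have : E φ = 0 := hE0.closure E.continuous continuous_const hφcl
    rw [hEfix φ hφ] at this
    exact hφne this
  tfae_have 2 → 1 := by
    intro h2
    refine le_antisymm ?_ hker_range
    have hE2 : E * E = E := h.rieszE_idem hρ
    have hcomm : M * E = E * M := by rw [← hD1, hD2]
    have hMU : ∀ x ∈ LinearMap.range (E : H →ₗ[ℂ] H), M.toLinearMap x ∈ LinearMap.range (E : H →ₗ[ℂ] H) := by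
      rintro x ⟨u, rfl⟩
      refine ⟨M u, ?_⟩
      have := congrArg (fun T : H →L[ℂ] H => T u) hcomm
      simpa [ContinuousLinearMap.mul_apply] using this.symm
    set T : Module.End ℂ (LinearMap.range (E : H →ₗ[ℂ] H)) := M.toLinearMap.restrict hMU with hT
    have eigen0 : ∀ μ : ℂ, T.HasEigenvalue μ → μ = 0 := by
      intro μ hμ
      obtain ⟨v, hv⟩ := hμ.exists_hasEigenvector
      have hvT : (T v : H) = μ • (v : H) := by
        rw [hv.apply_eq_smul]; rfl
      have hvM : M (v : H) = μ • (v : H) := by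
        rw [← hvT]; rfl
      have hvN : N (v : H) = (z + μ) • (v : H) := by
        have h' : N (v : H) - z • (v : H) = μ • (v : H) := by rw [← hMapply (v : H), hvM]
        rw [add_smul]
        linear_combination (norm := module) h'
      by_contra hμne
      have hnorm : 0 < ‖(z + μ) - z‖ := by
        simpa using norm_pos_iff.mpr hμne
      rcases le_or_gt ‖(z + μ) - z‖ ρ with hle | hgt
      · have := h.eigen_punctured hnorm hle hvN
        exact hv.2 (Subtype.coe_injective (by simpa using this))
      · have hEv : E (v : H) = 0 := h.rieszE_eigen_far hρ hgt hvN
        obtain ⟨u, hu⟩ := v.2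
        have : E (v : H) = (v : H) := by
          have h1 := congrArg (fun T : H →L[ℂ] H => T u) hE2
          simp only [ContinuousLinearMap.mul_apply] at h1
          rw [← hu] at hEv ⊢
          exact h1
        rw [hEv] at this
        exact hv.2 (Subtype.coe_injective (by simpa using this.symm))
    obtain ⟨n, hn⟩ : IsNilpotent T := by
      have hint : IsIntegral ℂ T := Algebra.IsIntegral.isIntegral T
      have hmonic := minpoly.monic hint
      have hsplits := IsAlgClosed.splits (minpoly ℂ T)
      have hprod := hsplits.eq_prod_roots_of_monic hmonic
      have hroots : (minpoly ℂ T).roots = Multiset.replicate ((minpoly ℂ T).roots.card) 0 := by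
        rw [Multiset.eq_replicate]
        refine ⟨rfl, fun a ha => ?_⟩
        have hroot := (Polynomial.mem_roots'.mp ha).2
        exact eigen0 a (Module.End.hasEigenvalue_iff_isRoot.mpr hroot)
      rw [hroots, Multiset.map_replicate, Multiset.prod_replicate] at hprod
      simp only [Polynomial.C_0, sub_zero] at hprod
      refine ⟨(minpoly ℂ T).roots.card, ?_⟩
      have haev := minpoly.aeval ℂ T
      rw [hprod, map_pow, Polynomial.aeval_X] at haev
      exact haev
    intro x hx
    obtain ⟨u, hu⟩ := hx
    have hpow : (M.toLinearMap ^ n) x = 0 := by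
      have hxU : x ∈ LinearMap.range (E : H →ₗ[ℂ] H) := ⟨u, hu⟩
      have h0 : (T ^ n) ⟨x, hxU⟩ = 0 := by rw [hn]; rfl
      rw [hT, Module.End.pow_restrict] at h0
      have := congrArg (Subtype.val) h0
      rwa [LinearMap.restrict_apply] at this
    have hred : ∀ m : ℕ, ∀ y : H, (M.toLinearMap ^ m) y = 0 → M y = 0 := by
      intro m
      induction m with
      | zero =>
        intro y hy
        simp only [pow_zero, Module.End.one_apply] at hy
        rw [hy, map_zero]
      | succ m ih =>
        intro y hy
        rw [pow_succ, Module.End.mul_apply] at hy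
        have hMy : M (M y) = 0 := ih (M y) hy
        by_contra hne
        obtain ⟨ψ, hψ, hψne⟩ := h2 (M y) hMy hne
        exact hψne (hperp ψ hψ y)
    exact hred n x hpow
  tfae_have 2 → 3 := by
    intro h2
    set L : LinearMap.ker (M : H →ₗ[ℂ] H) →ₗ[ℂ] W :=
      ((Submodule.orthogonalProjectionOnto W).toLinearMap).comp (LinearMap.ker (M : H →ₗ[ℂ] H)).subtype with hL
    have hinj : Function.Injective L := by
      rw [injective_iff_map_eq_zero]
      intro φ hφ0
      have hφW : (φ : H) ∈ Wᗮ := by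
        rw [← Submodule.orthogonalProjectionOnto_eq_zero_iff]
        exact hφ0
      by_contra hne
      have hcne : (φ : H) ≠ 0 := fun hc => hne (Subtype.coe_injective hc)
      obtain ⟨ψ, hψ, hψne⟩ := h2 (φ : H) φ.2 hcne
      exact hψne ((Submodule.mem_orthogonal W (φ : H)).mp hφW ψ hψ)
    have hsurj : Function.Surjective L :=
      (LinearMap.injective_iff_surjective_of_finrank_eq_finrank hdim).mp hinj
    exact ⟨hinj, hsurj⟩
  tfae_have 3 → 2 := by
    intro h3 φ hφ hφne
    by_contra hc
    push_neg at hc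
    have hφW : φ ∈ Wᗮ := by
      rw [Submodule.mem_orthogonal]
      exact hc
    have h0 : Submodule.orthogonalProjectionOnto W φ = 0 := Submodule.orthogonalProjectionOnto_eq_zero_iff.mpr hφW
    have : (⟨φ, hφ⟩ : LinearMap.ker (M : H →ₗ[ℂ] H)) = 0 := by
      apply h3.1
      show Submodule.orthogonalProjectionOnto W φ = Submodule.orthogonalProjectionOnto W ((0 : LinearMap.ker (M : H →ₗ[ℂ] H)) : H)
      rw [h0, Submodule.coe_zero, map_zero]
    exact hφne (by simpa using congrArg Subtype.val this)
  tfae_finish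

end Core6
section Adj
open Complex MeasureTheory ContinuousLinearMap Metric Set intervalIntegral
open scoped InnerProductSpace Real

variable {H : Type*} [NormedAddCommGroup H] [InnerProductSpace ℂ H] [CompleteSpace H]

lemma adjoint_complex_smul (a : ℂ) (A : H →L[ℂ] H) :
    adjoint (a • A) = (starRingEnd ℂ) a • adjoint A := by
  rw [← star_eq_adjoint, ← star_eq_adjoint, star_smul]
  rfl

lemma adjoint_real_smul (r : ℝ) (A : H →L[ℂ] H) :
    adjoint (r • A) = r • adjoint A := by
  have h1 : (r • A : H →L[ℂ] H) = (r : ℂ) • A := RCLike.real_smul_eq_coe_smul r A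
  have h2 : (r • adjoint A : H →L[ℂ] H) = (r : ℂ) • adjoint A :=
    RCLike.real_smul_eq_coe_smul r (adjoint A)
  rw [h1, h2, adjoint_complex_smul, Complex.conj_ofReal]

/-- the adjoint as a real-linear continuous map on operators -/
noncomputable def adjR (H : Type*) [NormedAddCommGroup H] [InnerProductSpace ℂ H]
    [CompleteSpace H] : (H →L[ℂ] H) →L[ℝ] (H →L[ℂ] H) :=
  LinearMap.mkContinuous
    { toFun := fun T => adjoint T
      map_add' := fun A B => by
        show adjoint (A + B) = adjoint A + adjoint B
        rw [← star_eq_adjoint, ← star_eq_adjoint, ← star_eq_adjoint, star_add]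
      map_smul' := fun r A => by simp only [RingHom.id_apply]; exact adjoint_real_smul r A }
    1 (fun T => by
      rw [one_mul]
      exact le_of_eq (LinearIsometryEquiv.norm_map ContinuousLinearMap.adjoint T))

@[simp] lemma adjR_apply (T : H →L[ℂ] H) : adjR H T = adjoint T := rfl

lemma conj_circleMap' (c : ℂ) (R : ℝ) (θ : ℝ) :
    (starRingEnd ℂ) (circleMap c R (-θ)) = circleMap ((starRingEnd ℂ) c) R θ := by
  simp only [circleMap, map_add, map_mul, Complex.conj_ofReal, ← Complex.exp_conj]
  congr 2
  simp [Complex.conj_ofReal]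

lemma conj_deriv_circleMap (c : ℂ) (R : ℝ) (θ : ℝ) :
    deriv (circleMap ((starRingEnd ℂ) c) R) θ
      = -((starRingEnd ℂ) (deriv (circleMap c R) (-θ))) := by
  rw [deriv_circleMap, deriv_circleMap]
  simp only [circleMap, zero_add, map_mul, Complex.conj_I, ← Complex.exp_conj,
    Complex.conj_ofReal]
  have harg : ((-θ : ℝ) : ℂ) * -Complex.I = (θ : ℝ) * Complex.I := by push_cast; ring
  rw [harg]
  ring

/-- Adjoint of a circle integral of operators. -/
lemma adjoint_circleIntegral {f : ℂ → (H →L[ℂ] H)} {c : ℂ} {R : ℝ} (hR : 0 ≤ R)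
    (hf : CircleIntegrable f c R) :
    adjoint (∮ ζ in C(c, R), f ζ)
      = -∮ ζ in C((starRingEnd ℂ) c, R), adjoint (f ((starRingEnd ℂ) ζ)) := by
  have hLHS : adjoint (∮ ζ in C(c, R), f ζ)
      = ∫ θ in (0:ℝ)..2 * π,
          (starRingEnd ℂ) (deriv (circleMap c R) θ) • adjoint (f (circleMap c R θ)) := by
    rw [circleIntegral, ← adjR_apply, ← ContinuousLinearMap.intervalIntegral_comp_comm _ hf.out]
    refine intervalIntegral.integral_congr (fun θ _ => ?_)
    rw [adjR_apply, ← star_eq_adjoint, star_smul, star_eq_adjoint]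
    rfl
  set g : ℝ → (H →L[ℂ] H) := fun θ =>
    (starRingEnd ℂ) (deriv (circleMap c R) θ) • adjoint (f (circleMap c R θ)) with hg
  have hRHS : (∮ ζ in C((starRingEnd ℂ) c, R), adjoint (f ((starRingEnd ℂ) ζ)))
      = -∫ θ in (0:ℝ)..2 * π, g (-θ) := by
    rw [circleIntegral]
    have hfun : ∀ θ : ℝ, deriv (circleMap ((starRingEnd ℂ) c) R) θ •
        adjoint (f ((starRingEnd ℂ) (circleMap ((starRingEnd ℂ) c) R θ))) = -g (-θ) := by
      intro θ
      rw [hg]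
      simp only []
      rw [conj_deriv_circleMap, ← conj_circleMap']
      rw [show (starRingEnd ℂ) ((starRingEnd ℂ) (circleMap c R (-θ))) = circleMap c R (-θ)
        from Complex.conj_conj _]
      rw [neg_smul]
    rw [intervalIntegral.integral_congr (fun θ _ => hfun θ), intervalIntegral.integral_neg]
  have hper : Function.Periodic g (2 * π) := by
    intro θ
    simp only [hg, deriv_circleMap, periodic_circleMap c R θ, periodic_circleMap 0 R θ]
  have hsub : (∫ θ in (0:ℝ)..2 * π, g (-θ)) = ∫ θ in (0:ℝ)..2 * π, g θ := by
    rw [intervalIntegral.integral_comp_neg]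
    have := hper.intervalIntegral_add_eq (-(2 * π)) 0
    simp only [neg_add_cancel, zero_add] at this
    rw [neg_zero]
    exact this
  rw [hLHS, hRHS, hsub, neg_neg]

variable {N : H →L[ℂ] H} {z : ℂ} {ρ : ℝ} {Res : ℂ → (H →L[ℂ] H)}

lemma ResHyp.adj (h : ResHyp N z ρ Res) :
    ResHyp (adjoint N) ((starRingEnd ℂ) z) ρ (fun ζ => adjoint (Res ((starRingEnd ℂ) ζ))) := by
  intro ζ h1 h2
  have hnorm : ‖(starRingEnd ℂ) ζ - z‖ = ‖ζ - (starRingEnd ℂ) z‖ := by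
    rw [show (starRingEnd ℂ) ζ - z = (starRingEnd ℂ) (ζ - (starRingEnd ℂ) z) by
      rw [map_sub, Complex.conj_conj]]
    exact RCLike.norm_conj _
  have hres := h ((starRingEnd ℂ) ζ) (by rw [hnorm]; exact h1) (by rw [hnorm]; exact h2)
  have hstar : star (N - (starRingEnd ℂ) ζ • (1 : H →L[ℂ] H))
      = adjoint N - ζ • (1 : H →L[ℂ] H) := by
    rw [star_sub, star_smul, star_one, star_eq_adjoint]
    simp [Complex.conj_conj]
  constructor
  · have := congrArg star hres.2
    rw [star_mul, star_one, hstar, star_eq_adjoint] at this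
    exact this
  · have := congrArg star hres.1
    rw [star_mul, star_one, hstar, star_eq_adjoint] at this
    exact this

lemma conj_two_pi_I_inv :
    star ((2 * (Real.pi : ℂ) * Complex.I)⁻¹)
      = -((2 * (Real.pi : ℂ) * Complex.I)⁻¹) := by
  rw [show star ((2 * (Real.pi : ℂ) * Complex.I)⁻¹)
    = (starRingEnd ℂ) ((2 * (Real.pi : ℂ) * Complex.I)⁻¹) from rfl, map_inv₀]
  rw [show (starRingEnd ℂ) (2 * (Real.pi : ℂ) * Complex.I)
    = -(2 * (Real.pi : ℂ) * Complex.I) by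
      rw [map_mul, map_mul, Complex.conj_I]
      rw [map_ofNat (starRingEnd ℂ) 2]
      rw [Complex.conj_ofReal]
      ring]
  rw [inv_neg]

lemma ResHyp.adjoint_rieszE (h : ResHyp N z ρ Res) (hρ : 0 < ρ) :
    adjoint (rieszE Res z ρ)
      = rieszE (fun ζ => adjoint (Res ((starRingEnd ℂ) ζ))) ((starRingEnd ℂ) z) ρ := by
  rw [rieszE, rieszE, ← star_eq_adjoint, star_neg, star_smul, conj_two_pi_I_inv,
    star_eq_adjoint, adjoint_circleIntegral hρ.le (h.circleIntegrable hρ le_rfl)]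
  module

lemma ResHyp.adjoint_rieszD (h : ResHyp N z ρ Res) (hρ : 0 < ρ) :
    adjoint (rieszD Res z ρ)
      = rieszD (fun ζ => adjoint (Res ((starRingEnd ℂ) ζ))) ((starRingEnd ℂ) z) ρ := by
  rw [rieszD, rieszD, ← star_eq_adjoint, star_neg, star_smul, conj_two_pi_I_inv,
    star_eq_adjoint, adjoint_circleIntegral hρ.le (h.circleIntegrable_sub_smul hρ le_rfl)]
  have hcongr : (∮ ζ in C((starRingEnd ℂ) z, ρ),
        adjoint ((((starRingEnd ℂ) ζ) - z) • Res ((starRingEnd ℂ) ζ)))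
      = ∮ ζ in C((starRingEnd ℂ) z, ρ),
        (ζ - (starRingEnd ℂ) z) • adjoint (Res ((starRingEnd ℂ) ζ)) := by
    refine circleIntegral.integral_congr hρ.le (fun ζ _ => ?_)
    rw [adjoint_complex_smul, map_sub, Complex.conj_conj]
  rw [hcongr]
  module

/-- finite rank of the adjoint -/
lemma finiteDimensional_range_adjoint (A : H →L[ℂ] H)
    (hA : FiniteDimensional ℂ (LinearMap.range (A : H →ₗ[ℂ] H))) :
    FiniteDimensional ℂ (LinearMap.range ((adjoint A : H →L[ℂ] H) : H →ₗ[ℂ] H)) := by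
  have hle : LinearMap.range ((adjoint A : H →L[ℂ] H) : H →ₗ[ℂ] H) ≤ (LinearMap.ker (A : H →ₗ[ℂ] H))ᗮ := by
    rintro x ⟨y, rfl⟩
    rw [Submodule.mem_orthogonal']
    intro u hu
    rw [ContinuousLinearMap.coe_coe, ContinuousLinearMap.adjoint_inner_left]
    rw [show A u = 0 from hu, inner_zero_right]
  have hfin : FiniteDimensional ℂ ((LinearMap.ker (A : H →ₗ[ℂ] H))ᗮ : Submodule ℂ H) := by
    set f : ((LinearMap.ker (A : H →ₗ[ℂ] H))ᗮ : Submodule ℂ H) →ₗ[ℂ] LinearMap.range (A : H →ₗ[ℂ] H) :=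
      LinearMap.codRestrict (LinearMap.range (A : H →ₗ[ℂ] H))
        (A.toLinearMap.comp (Submodule.subtype _)) (fun x => ⟨x, rfl⟩) with hf
    have hinj : Function.Injective f := by
      rw [injective_iff_map_eq_zero]
      intro x hx
      have hx0 : A (x : H) = 0 := by
        have := congrArg Subtype.val hx
        exact this
      have hxker : (x : H) ∈ LinearMap.ker (A : H →ₗ[ℂ] H) := hx0
      have : (x : H) = 0 := by
        have h1 := x.2
        rw [Submodule.mem_orthogonal'] at h1
        have := h1 (x : H) hxker
        rwa [inner_self_eq_zero] at this
      exact Subtype.coe_injective this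
    exact FiniteDimensional.of_injective f hinj
  exact Submodule.finiteDimensional_of_le hle

end Adj

/-- the eight equivalent characterisations of semisimplicity of an isolated
eigenvalue `z₀` of `N₀`. -/
theorem semisimple_tfae
    {H : Type*} [NormedAddCommGroup H] [InnerProductSpace ℂ H] [CompleteSpace H]
    (N₀ : H →L[ℂ] H) (z₀ : ℂ) (ρ₀ : ℝ) (hρ₀ : 0 < ρ₀)
    -- `z₀` is an isolated point of the spectrum which is an eigenvalue of `N₀`
    (hz₀ : z₀ ∈ spectrum ℂ N₀)
    (hev : ∃ φ : H, φ ≠ 0 ∧ N₀ φ = z₀ • φ)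
    (hiso : ∀ ζ : ℂ, 0 < ‖ζ - z₀‖ → ‖ζ - z₀‖ ≤ ρ₀ → ζ ∉ spectrum ℂ N₀)
    -- the resolvent function on the punctured disc
    (Res : ℂ → (H →L[ℂ] H))
    (hRes : ∀ ζ : ℂ, 0 < ‖ζ - z₀‖ → ‖ζ - z₀‖ ≤ ρ₀ →
      (N₀ - ζ • (1 : H →L[ℂ] H)) * Res ζ = 1 ∧ Res ζ * (N₀ - ζ • (1 : H →L[ℂ] H)) = 1)
    -- finite rank / finite-dimensionality assumptions
    (hfinE : FiniteDimensional ℂ (LinearMap.range (rieszE Res z₀ ρ₀ : H →ₗ[ℂ] H)))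
    [FiniteDimensional ℂ (LinearMap.ker ((N₀ - z₀ • (1 : H →L[ℂ] H) : H →L[ℂ] H) : H →ₗ[ℂ] H))]
    [FiniteDimensional ℂ
      (LinearMap.ker ((adjoint N₀ - (starRingEnd ℂ) z₀ • (1 : H →L[ℂ] H) : H →L[ℂ] H) : H →ₗ[ℂ] H))]
    (hdim : Module.finrank ℂ (LinearMap.ker ((N₀ - z₀ • (1 : H →L[ℂ] H) : H →L[ℂ] H) : H →ₗ[ℂ] H)) =
      Module.finrank ℂ
        (LinearMap.ker ((adjoint N₀ - (starRingEnd ℂ) z₀ • (1 : H →L[ℂ] H) : H →L[ℂ] H) : H →ₗ[ℂ] H))) :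
    [ -- (1) range E = ker (N₀ - z₀)
      LinearMap.range (rieszE Res z₀ ρ₀ : H →ₗ[ℂ] H) = LinearMap.ker ((N₀ - z₀ • (1 : H →L[ℂ] H) : H →L[ℂ] H) : H →ₗ[ℂ] H),
      -- (2) every nonzero eigenvector is non-orthogonal to some adjoint eigenvector
      ∀ φ ∈ LinearMap.ker ((N₀ - z₀ • (1 : H →L[ℂ] H) : H →L[ℂ] H) : H →ₗ[ℂ] H), φ ≠ 0 →
        ∃ ψ ∈ LinearMap.ker ((adjoint N₀ - (starRingEnd ℂ) z₀ • (1 : H →L[ℂ] H) : H →L[ℂ] H) : H →ₗ[ℂ] H),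
          ⟪(ψ : H), (φ : H)⟫_ℂ ≠ 0,
      -- (3) orthogonal projection restricts to an isomorphism of the eigenspaces
      Function.Bijective (fun φ : LinearMap.ker ((N₀ - z₀ • (1 : H →L[ℂ] H) : H →L[ℂ] H) : H →ₗ[ℂ] H) =>
        Submodule.orthogonalProjectionOnto
          (LinearMap.ker ((adjoint N₀ - (starRingEnd ℂ) z₀ • (1 : H →L[ℂ] H) : H →L[ℂ] H) : H →ₗ[ℂ] H)) (φ : H)),
      -- (4) D = 0
      rieszD Res z₀ ρ₀ = 0,
      -- (5) range E* = ker (N₀* - conj z₀)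
      LinearMap.range ((adjoint (rieszE Res z₀ ρ₀) : H →L[ℂ] H) : H →ₗ[ℂ] H) =
        LinearMap.ker ((adjoint N₀ - (starRingEnd ℂ) z₀ • (1 : H →L[ℂ] H) : H →L[ℂ] H) : H →ₗ[ℂ] H),
      -- (6) every nonzero adjoint eigenvector is non-orthogonal to some eigenvector
      ∀ ψ ∈ LinearMap.ker ((adjoint N₀ - (starRingEnd ℂ) z₀ • (1 : H →L[ℂ] H) : H →L[ℂ] H) : H →ₗ[ℂ] H), ψ ≠ 0 →
        ∃ φ ∈ LinearMap.ker ((N₀ - z₀ • (1 : H →L[ℂ] H) : H →L[ℂ] H) : H →ₗ[ℂ] H), ⟪(φ : H), (ψ : H)⟫_ℂ ≠ 0,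
      -- (7) orthogonal projection restricts to an isomorphism the other way
      Function.Bijective
        (fun ψ : LinearMap.ker ((adjoint N₀ - (starRingEnd ℂ) z₀ • (1 : H →L[ℂ] H) : H →L[ℂ] H) : H →ₗ[ℂ] H) =>
          Submodule.orthogonalProjectionOnto
            (LinearMap.ker ((N₀ - z₀ • (1 : H →L[ℂ] H) : H →L[ℂ] H) : H →ₗ[ℂ] H)) (ψ : H)),
      -- (8) D* = 0
      adjoint (rieszD Res z₀ ρ₀) = 0 ].TFAE := by

  have h : ResHyp N₀ z₀ ρ₀ Res := hRes
  have hadj := h.adj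
  have hE' : adjoint (rieszE Res z₀ ρ₀)
      = rieszE (fun ζ => adjoint (Res ((starRingEnd ℂ) ζ))) ((starRingEnd ℂ) z₀) ρ₀ :=
    h.adjoint_rieszE hρ₀
  have hD' : adjoint (rieszD Res z₀ ρ₀)
      = rieszD (fun ζ => adjoint (Res ((starRingEnd ℂ) ζ))) ((starRingEnd ℂ) z₀) ρ₀ :=
    h.adjoint_rieszD hρ₀
  have hsimp : adjoint (adjoint N₀)
      - (starRingEnd ℂ) ((starRingEnd ℂ) z₀) • (1 : H →L[ℂ] H)
      = N₀ - z₀ • (1 : H →L[ℂ] H) := by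
    rw [adjoint_adjoint, Complex.conj_conj]
  haveI hker2 : FiniteDimensional ℂ (LinearMap.ker ((adjoint (adjoint N₀)
      - (starRingEnd ℂ) ((starRingEnd ℂ) z₀) • (1 : H →L[ℂ] H) : H →L[ℂ] H) : H →ₗ[ℂ] H)) := by
    rw [hsimp]; infer_instance
  have hfinE' : FiniteDimensional ℂ (LinearMap.range
      (rieszE (fun ζ => adjoint (Res ((starRingEnd ℂ) ζ))) ((starRingEnd ℂ) z₀) ρ₀ : H →ₗ[ℂ] H)) := by
    rw [← hE']
    exact finiteDimensional_range_adjoint _ hfinE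
  have hdim' : Module.finrank ℂ
      (LinearMap.ker ((adjoint N₀ - (starRingEnd ℂ) z₀ • (1 : H →L[ℂ] H) : H →L[ℂ] H) : H →ₗ[ℂ] H)) =
      Module.finrank ℂ (LinearMap.ker ((adjoint (adjoint N₀)
        - (starRingEnd ℂ) ((starRingEnd ℂ) z₀) • (1 : H →L[ℂ] H) : H →L[ℂ] H) : H →ₗ[ℂ] H)) := by
    rw [hsimp]
    exact hdim.symm
  have GL1 := h.riesz_tfae hρ₀ hfinE hdim
  have GL2 := hadj.riesz_tfae hρ₀ hfinE' hdim'
  rw [hsimp, ← hE', ← hD'] at GL2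
  have h48 : rieszD Res z₀ ρ₀ = 0 ↔ adjoint (rieszD Res z₀ ρ₀) = 0 := by
    constructor
    · intro h4
      rw [h4, ← star_eq_adjoint, star_zero]
    · intro h8
      have := congrArg adjoint h8
      rw [adjoint_adjoint] at this
      rw [this, ← star_eq_adjoint, star_zero]
  tfae_have 1 ↔ 2 := GL1.out 0 1
  tfae_have 1 ↔ 3 := GL1.out 0 2
  tfae_have 1 ↔ 4 := GL1.out 0 3
  tfae_have 5 ↔ 6 := GL2.out 0 1
  tfae_have 5 ↔ 7 := GL2.out 0 2
  tfae_have 5 ↔ 8 := GL2.out 0 3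
  tfae_have 4 ↔ 8 := h48
  tfae_finish
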